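/- Let A and B be n×n max-plus matrices with λ(A) ≤ 0 and λ(B) ≤ 0. Then the column spans of A* and B* coincide (span(A*) = span(B*)) if and only if A* = B*. -/

import Mathlib

namespace MaxPlus

/-- Max-plus (tropical) matrix product over `EReal` (`⊥ = -∞` is the max-plus zero,
`+` is the max-plus multiplication, `⊔`/`⨆` is the max-plus addition). -/
noncomputable def mmul {n : ℕ} (A B : Matrix (Fin n) (Fin n) EReal) : Matrix (Fin n) (Fin n) EReal :=
  fun i j => ⨆ k, A i k + B k j

/-- The max-plus identity matrix. -/
noncomputable def mId (n : ℕ) : Matrix (Fin n) (Fin n) EReal := fun i j => if i = j then 0 else ⊥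

/-- Max-plus matrix powers. -/
noncomputable def mpow {n : ℕ} (A : Matrix (Fin n) (Fin n) EReal) : ℕ → Matrix (Fin n) (Fin n) EReal
  | 0 => mId n
  | m + 1 => mmul (mpow A m) A

/-- The max-plus Kleene star `A* = I ⊕ A ⊕ A² ⊕ ⋯` (entrywise supremum of all powers). -/
noncomputable def mstar {n : ℕ} (A : Matrix (Fin n) (Fin n) EReal) : Matrix (Fin n) (Fin n) EReal :=
  fun i j => ⨆ m, mpow A m i j

/-- Weight of the cycle determined by the list `l = [i₁,…,i_k]`,
namely `A i₁ i₂ + ⋯ + A i_k i₁`. -/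
noncomputable def cycleWeight {n : ℕ} (A : Matrix (Fin n) (Fin n) EReal) (l : List (Fin n)) : EReal :=
  ((l.zip (l.rotate 1)).map fun p => A p.1 p.2).sum

/-- A nonempty list of pairwise distinct indices, representing an elementary cycle. -/
def IsCycle {n : ℕ} (l : List (Fin n)) : Prop := l ≠ [] ∧ l.Nodup

/-- All elementary cycles have nonpositive weight, i.e. the maximal cycle mean `λ(A) ≤ 0`. -/
def CycleBound {n : ℕ} (A : Matrix (Fin n) (Fin n) EReal) : Prop :=
  ∀ l : List (Fin n), IsCycle l → cycleWeight A l ≤ 0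

/-- A definite matrix: maximal cycle mean `0` and zero (max-plus unit) diagonal.
(The diagonal entries give cycles of weight `0`, so `λ(A) = 0` is equivalent to
`CycleBound A` here.) -/
def Definite {n : ℕ} (A : Matrix (Fin n) (Fin n) EReal) : Prop :=
  CycleBound A ∧ ∀ i, A i i = 0

/-- Max-plus action of a matrix on a vector: `(A ⊙ x)_i = max_j (A_{ij} + x_j)`. -/
noncomputable def mapVec {n : ℕ} (A : Matrix (Fin n) (Fin n) EReal) (x : Fin n → EReal) :
    Fin n → EReal :=
  fun i => ⨆ j, A i j + x j

/-- The max-plus eigenspace of `A` for the eigenvalue `0`. -/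
def eig {n : ℕ} (A : Matrix (Fin n) (Fin n) EReal) : Set (Fin n → EReal) :=
  {x | mapVec A x = x}

/-- The max-plus column span of a matrix. -/
def mspan {n : ℕ} (A : Matrix (Fin n) (Fin n) EReal) : Set (Fin n → EReal) :=
  {y | ∃ α : Fin n → EReal, y = fun i => ⨆ j, α j + A i j}

/- ### Auxiliary lemmas -/

lemma ereal_key (a : ℝ) (x : EReal) : ((-a : ℝ) : EReal) + ((a : ℝ) + x) = x := by
  induction x using EReal.rec with
  | bot => simp
  | top =>
    have h1 : ((a:ℝ):EReal) + ⊤ = ⊤ := by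
      rw [add_comm]; exact EReal.top_add_of_ne_bot (by simp)
    rw [h1, add_comm]
    exact EReal.top_add_of_ne_bot (by simp)
  | coe x =>
    rw [← EReal.coe_add, ← EReal.coe_add]
    norm_num

lemma ereal_add_iSup {ι : Sort*} (a : EReal) (f : ι → EReal) :
    a + ⨆ i, f i = ⨆ i, a + f i := by
  rcases isEmpty_or_nonempty ι with h | h
  · simp [iSup_of_empty]
  refine le_antisymm ?_ (iSup_le fun i => add_le_add_right (le_iSup f i) a)
  induction a using EReal.rec with
  | bot => simp
  | top =>
    by_cases hf : ∀ i, f i = ⊥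
    · simp [hf]
    · push_neg at hf
      obtain ⟨i, hi⟩ := hf
      calc (⊤ : EReal) + ⨆ i, f i ≤ ⊤ := le_top
        _ = ⊤ + f i := (EReal.top_add_of_ne_bot hi).symm
        _ ≤ ⨆ i, ⊤ + f i := le_iSup (fun i => (⊤:EReal) + f i) i
  | coe a =>
    have h1 : (⨆ i, f i) ≤ ((-a : ℝ) : EReal) + ⨆ i, ((a : ℝ) : EReal) + f i := by
      apply iSup_le fun i => ?_
      rw [← ereal_key a (f i)]
      exact add_le_add_right (le_iSup (fun i => ((a:ℝ):EReal) + f i) i) _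
    calc ((a : ℝ) : EReal) + ⨆ i, f i
        ≤ (a : ℝ) + (((-a : ℝ) : EReal) + ⨆ i, ((a:ℝ):EReal) + f i) := add_le_add_right h1 _
      _ = ⨆ i, ((a:ℝ):EReal) + f i := by
          have := ereal_key (-a) (⨆ i, ((a:ℝ):EReal) + f i)
          rwa [neg_neg] at this

lemma ereal_iSup_add {ι : Sort*} (a : EReal) (f : ι → EReal) :
    (⨆ i, f i) + a = ⨆ i, f i + a := by
  rw [add_comm, ereal_add_iSup]
  simp [add_comm]

lemma mmul_assoc {n : ℕ} (A B C : Matrix (Fin n) (Fin n) EReal) :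
    mmul (mmul A B) C = mmul A (mmul B C) := by
  funext i j
  simp only [mmul, ereal_iSup_add, ereal_add_iSup]
  rw [iSup_comm]
  congr 1; funext l; congr 1; funext k
  rw [add_assoc]

lemma mmul_mId {n : ℕ} (A : Matrix (Fin n) (Fin n) EReal) : mmul A (mId n) = A := by
  funext i j
  simp only [mmul, mId]
  apply le_antisymm
  · apply iSup_le fun k => ?_
    by_cases h : k = j
    · subst h; simp
    · simp [h]
  · have := le_iSup (fun k => A i k + if k = j then (0:EReal) else ⊥) j
    simpa using this

lemma mId_mmul {n : ℕ} (A : Matrix (Fin n) (Fin n) EReal) : mmul (mId n) A = A := by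
  funext i j
  simp only [mmul, mId]
  apply le_antisymm
  · apply iSup_le fun k => ?_
    by_cases h : i = k
    · subst h; simp
    · simp [h]
  · have := le_iSup (fun k => (if i = k then (0:EReal) else ⊥) + A k j) i
    simpa using this

lemma mpow_add {n : ℕ} (A : Matrix (Fin n) (Fin n) EReal) (p q : ℕ) :
    mpow A (p + q) = mmul (mpow A p) (mpow A q) := by
  induction q with
  | zero => simp [mpow, mmul_mId]
  | succ q ih => rw [← Nat.add_assoc]; simp only [mpow]; rw [ih, mmul_assoc]

lemma mId_le_mstar {n : ℕ} (A : Matrix (Fin n) (Fin n) EReal) (i j : Fin n) :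
    mId n i j ≤ mstar A i j := by
  have := le_iSup (fun m => mpow A m i j) 0
  exact this

lemma mstar_diag_nonneg {n : ℕ} (A : Matrix (Fin n) (Fin n) EReal) (j : Fin n) :
    (0 : EReal) ≤ mstar A j j := by
  have := mId_le_mstar A j j
  simpa [mId] using this

lemma mstar_mmul_mstar {n : ℕ} (A : Matrix (Fin n) (Fin n) EReal) :
    mmul (mstar A) (mstar A) = mstar A := by
  funext i j
  apply le_antisymm
  · apply iSup_le fun k => ?_
    simp only [mstar]
    rw [ereal_iSup_add]
    apply iSup_le fun p => ?_
    rw [ereal_add_iSup]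
    apply iSup_le fun q => ?_
    have h1 : mpow A p i k + mpow A q k j ≤ mpow A (p + q) i j := by
      rw [mpow_add]
      exact le_iSup (fun k => mpow A p i k + mpow A q k j) k
    exact h1.trans (le_iSup (fun m => mpow A m i j) (p + q))
  · have h0 : mstar A i j = mstar A i j + mId n j j := by simp [mId]
    calc mstar A i j = mstar A i j + mId n j j := h0
      _ ≤ mstar A i j + mstar A j j := add_le_add_right (mId_le_mstar A j j) _
      _ ≤ _ := le_iSup (fun k => mstar A i k + mstar A k j) j

/-- Membership in the span of `A*` means being fixed by `A*`. -/
lemma mapVec_eq_of_mem_mspan {n : ℕ} (A : Matrix (Fin n) (Fin n) EReal)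
    {y : Fin n → EReal} (hy : y ∈ mspan (mstar A)) :
    ∀ i, (⨆ k, mstar A i k + y k) = y i := by
  obtain ⟨α, rfl⟩ := hy
  intro i
  have : (⨆ k, mstar A i k + ⨆ j, α j + mstar A k j)
      = ⨆ j, α j + ⨆ k, mstar A i k + mstar A k j := by
    simp only [ereal_add_iSup]
    rw [iSup_comm]
    congr 1; funext jj; congr 1; funext kk
    rw [← add_assoc, add_comm (mstar A i kk) (α jj), add_assoc]
  rw [this]
  congr 1; funext jj
  congr 1
  have := congrFun (congrFun (mstar_mmul_mstar A) i) jj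
  simpa [mmul] using this

lemma col_mem_mspan {n : ℕ} (M : Matrix (Fin n) (Fin n) EReal) (j : Fin n) :
    (fun i => M i j) ∈ mspan M := by
  refine ⟨fun k => if k = j then 0 else ⊥, ?_⟩
  funext i
  apply le_antisymm
  · have := le_iSup (fun k => (if k = j then (0:EReal) else ⊥) + M i k) j
    simpa using this
  · apply iSup_le fun k => ?_
    by_cases h : k = j
    · subst h; simp
    · simp [h]

lemma mstar_le_of_span_subset {n : ℕ} (A B : Matrix (Fin n) (Fin n) EReal)
    (h : mspan (mstar B) ⊆ mspan (mstar A)) :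
    ∀ i j, mstar A i j ≤ mstar B i j := by
  intro i j
  have hc : (fun i => mstar B i j) ∈ mspan (mstar A) := h (col_mem_mspan (mstar B) j)
  have hfix := mapVec_eq_of_mem_mspan A hc i
  calc mstar A i j = mstar A i j + 0 := by rw [add_zero]
    _ ≤ mstar A i j + mstar B j j := add_le_add_right (mstar_diag_nonneg B j) _
    _ ≤ ⨆ k, mstar A i k + mstar B k j := le_iSup (fun k => mstar A i k + mstar B k j) j
    _ = mstar B i j := hfix

/-- For matrices `A, B` with `λ(A) ≤ 0` and `λ(B) ≤ 0`, the column spans of the Kleene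
stars coincide iff the Kleene stars themselves coincide. -/
theorem span_mstar_eq_iff_mstar_eq {n : ℕ} (A B : Matrix (Fin n) (Fin n) EReal)
    (hA : ∀ i j, A i j ≠ ⊤) (hB : ∀ i j, B i j ≠ ⊤)
    (hbA : CycleBound A) (hbB : CycleBound B) :
    mspan (mstar A) = mspan (mstar B) ↔ mstar A = mstar B := by
  constructor
  · intro h
    funext i j
    exact le_antisymm (mstar_le_of_span_subset A B h.ge i j)
      (mstar_le_of_span_subset B A h.le i j)
  · intro h; rw [h]

end MaxPlus
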